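/- arXiv:1611.07468 — 7 statements merged into one kernel-verified Lean document; each statement's English description precedes it below -/
import Mathlib

section
/- Let G and H be connected graphs with at least 2 vertices and U a non-empty subset of V(G). Then F(G(U)ΠH) = |V(H)|·F(G) + 6|E(H)|·Σ_{u∈U} d_G(u)² + 3M₁(H)·Σ_{u∈U} d_G(u) + |U|·F(H). -/
open SimpleGraph Finset
open scoped Classical

noncomputable section

/-- The generalized hierarchical product `G(U)ΠH`. -/
def hierProd {α β : Type*} (G : SimpleGraph α) (H : SimpleGraph β) (U : Set α) :
    SimpleGraph (α × β) where
  Adj p q := (p.1 = q.1 ∧ p.1 ∈ U ∧ H.Adj p.2 q.2) ∨ (p.2 = q.2 ∧ G.Adj p.1 q.1)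
  symm := by
    constructor
    rintro p q (⟨h1, h2, h3⟩ | ⟨h1, h2⟩)
    · exact Or.inl ⟨h1.symm, h1 ▸ h2, h3.symm⟩
    · exact Or.inr ⟨h1.symm, h2.symm⟩
  loopless := by
    constructor
    rintro p (⟨_, _, h⟩ | ⟨_, h⟩)
    · exact H.loopless.irrefl _ h
    · exact G.loopless.irrefl _ h

/-- The F-index (forgotten topological index): sum of cubes of degrees. -/
def Findex {α : Type*} [Fintype α] (G : SimpleGraph α) : ℕ :=
  ∑ v, G.degree v ^ 3

/-- The first Zagreb index: sum of squares of degrees. -/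
def M1 {α : Type*} [Fintype α] (G : SimpleGraph α) : ℕ :=
  ∑ v, G.degree v ^ 2

/-- The general first Zagreb index with exponent `n`. -/
def xiIndex {α : Type*} [Fintype α] (G : SimpleGraph α) (n : ℕ) : ℕ :=
  ∑ v, G.degree v ^ n

/-- The redefined Zagreb index `ReZG(G) = Σ_{uv∈E} d(u)d(v)(d(u)+d(v))`. -/
def ReZG {α : Type*} [Fintype α] (G : SimpleGraph α) : ℕ :=
  ∑ e ∈ G.edgeFinset,
    Sym2.lift ⟨fun u v => G.degree u * G.degree v * (G.degree u + G.degree v),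
      fun u v => by ring⟩ e

/-- The subdivision graph `S(G)`: each edge replaced by a path of length two. -/
def Sgraph {α : Type*} (G : SimpleGraph α) : SimpleGraph (α ⊕ ↥G.edgeSet) where
  Adj x y :=
    match x, y with
    | Sum.inl u, Sum.inr e => u ∈ (e : Sym2 α)
    | Sum.inr e, Sum.inl u => u ∈ (e : Sym2 α)
    | _, _ => False
  symm := by constructor; rintro (u | e) (v | f) h <;> simp_all
  loopless := by constructor; rintro (u | e) h <;> simp_all

/-- The graph on `V(G) ⊕ E(G)` whose only edges are the original edges of `G`. -/
def Ograph {α : Type*} (G : SimpleGraph α) : SimpleGraph (α ⊕ ↥G.edgeSet) where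
  Adj x y :=
    match x, y with
    | Sum.inl u, Sum.inl v => G.Adj u v
    | _, _ => False
  symm := by constructor; rintro (u | e) (v | f) h <;> simp_all <;> exact h.symm
  loopless := by constructor; rintro (u | e) h <;> simp_all

/-- The graph on `V(G) ⊕ E(G)` whose edges join pairs of adjacent edges of `G`
(line-graph adjacency). -/
def Lgraph {α : Type*} (G : SimpleGraph α) : SimpleGraph (α ⊕ ↥G.edgeSet) where
  Adj x y :=
    match x, y with
    | Sum.inr e, Sum.inr f => e ≠ f ∧ ∃ u, u ∈ (e : Sym2 α) ∧ u ∈ (f : Sym2 α)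
    | _, _ => False
  symm := by
    constructor
    rintro (u | e) (v | f) h <;> simp_all
    exact ⟨Ne.symm h.1, h.2.imp fun u hu => hu.symm⟩
  loopless := by constructor; rintro (u | e) h <;> simp_all

/-- The triangle parallel graph `R(G)`. -/
def Rgraph {α : Type*} (G : SimpleGraph α) : SimpleGraph (α ⊕ ↥G.edgeSet) :=
  Sgraph G ⊔ Ograph G

/-- The line superposition graph `Q(G)`. -/
def Qgraph {α : Type*} (G : SimpleGraph α) : SimpleGraph (α ⊕ ↥G.edgeSet) :=
  Sgraph G ⊔ Lgraph G

/-- The total graph `T(G)`. -/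
def Tgraph {α : Type*} (G : SimpleGraph α) : SimpleGraph (α ⊕ ↥G.edgeSet) :=
  Sgraph G ⊔ Ograph G ⊔ Lgraph G

/-- The F-sum `G +_F H`, where `K` is one of `S(G), R(G), Q(G), T(G)`:
the generalized hierarchical product `K(V(G))ΠH`. -/
def FSum {α β : Type*} {G : SimpleGraph α} (K : SimpleGraph (α ⊕ ↥G.edgeSet))
    (H : SimpleGraph β) : SimpleGraph ((α ⊕ ↥G.edgeSet) × β) :=
  hierProd K H (Set.range Sum.inl)

end

lemma hierProd_neighborFinset {α β : Type*} [Fintype α] [Fintype β]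
    (G : SimpleGraph α) (H : SimpleGraph β) (U : Set α) (u : α) (v : β) :
    (hierProd G H U).neighborFinset (u, v) =
      (G.neighborFinset u).image (fun w => (w, v)) ∪
        (if u ∈ U then (H.neighborFinset v).image (fun w => (u, w)) else ∅) := by
  classical
  ext ⟨a, b⟩
  by_cases hu : u ∈ U <;>
    simp only [SimpleGraph.mem_neighborFinset] <;>
    simp [hierProd, SimpleGraph.mem_neighborFinset, SimpleGraph.Adj, hu, Prod.ext_iff] <;>
    aesop

lemma hierProd_degree {α β : Type*} [Fintype α] [Fintype β]
    (G : SimpleGraph α) (H : SimpleGraph β) (U : Set α) (u : α) (v : β) :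
    (hierProd G H U).degree (u, v) =
      G.degree u + if u ∈ U then H.degree v else 0 := by
  classical
  rw [← SimpleGraph.card_neighborFinset_eq_degree, hierProd_neighborFinset]
  rw [Finset.card_union_of_disjoint]
  · congr 1
    · rw [Finset.card_image_of_injective _ (fun x y h => (Prod.ext_iff.mp h).1)]
      exact SimpleGraph.card_neighborFinset_eq_degree G u
    · split_ifs with hu
      · rw [Finset.card_image_of_injective _ (fun x y h => (Prod.ext_iff.mp h).2)]
        exact SimpleGraph.card_neighborFinset_eq_degree H v
      · simp
  · split_ifs with hu
    · rw [Finset.disjoint_left]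
      rintro ⟨a, b⟩ h1 h2
      simp only [Finset.mem_image, SimpleGraph.mem_neighborFinset] at h1 h2
      obtain ⟨w, hw, hw'⟩ := h1
      obtain ⟨w', hw2, hw2'⟩ := h2
      rw [Prod.ext_iff] at hw' hw2'
      have : w' = v := hw2'.2.trans hw'.2.symm
      exact H.loopless.irrefl v (this ▸ hw2)
    · simp

theorem Findex_hierProd {α β : Type*} [Fintype α] [Fintype β]
    (G : SimpleGraph α) (H : SimpleGraph β) (U : Set α)
    (hcard : 2 ≤ Fintype.card α)
    (hG : G.Connected) (hH : H.Connected) (hU : U.Nonempty) :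
    Findex (hierProd G H U) =
      Fintype.card β * Findex G
        + 6 * H.edgeFinset.card * ∑ u ∈ U.toFinset, G.degree u ^ 2
        + 3 * M1 H * ∑ u ∈ U.toFinset, G.degree u
        + U.toFinset.card * Findex H := by
  classical
  have hUF : U.toFinset = Finset.univ.filter (· ∈ U) := by ext; simp
  have hs : ∑ v : β, H.degree v = 2 * H.edgeFinset.card :=
    SimpleGraph.sum_degrees_eq_twice_card_edges H
  calc Findex (hierProd G H U)
      = ∑ u : α, ∑ v : β, (G.degree u + if u ∈ U then H.degree v else 0) ^ 3 := by
        rw [Findex, Fintype.sum_prod_type]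
        simp [hierProd_degree]
    _ = ∑ u : α, ((Fintype.card β) * G.degree u ^ 3 +
          if u ∈ U then
            (3 * G.degree u ^ 2 * ∑ v : β, H.degree v
              + 3 * G.degree u * M1 H + Findex H) else 0) := by
        refine Finset.sum_congr rfl fun u _ => ?_
        split_ifs with hu
        · have : ∀ v : β, (G.degree u + H.degree v) ^ 3 =
              G.degree u ^ 3 + (3 * (G.degree u ^ 2 * H.degree v)
                + 3 * (G.degree u * H.degree v ^ 2) + H.degree v ^ 3) := by
            intro v; ring
          simp only [this, Finset.sum_add_distrib, Finset.sum_const,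
            Finset.card_univ, ← Finset.mul_sum, M1, Findex, smul_eq_mul]
          ring
        · simp
    _ = _ := by
        rw [Finset.sum_add_distrib, ← Finset.sum_filter, ← hUF, ← Finset.mul_sum,
          Finset.sum_add_distrib, Finset.sum_add_distrib, Finset.sum_const]
        simp only [smul_eq_mul, ← Finset.sum_mul, ← Finset.mul_sum, hs, Findex]
        ring
end

section
/- Let S(G) be the subdivision graph of G, obtained by replacing each edge of G by a path of length two. Then F(S(G)) = F(G) + 8|E(G)|. -/
open SimpleGraph Finset
open scoped Classical

lemma Sgraph_degree_inl {α : Type*} [Fintype α] (G : SimpleGraph α) (u : α) :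
    (Sgraph G).degree (Sum.inl u) = G.degree u := by
  classical
  rw [← SimpleGraph.card_neighborFinset_eq_degree,
    ← SimpleGraph.card_incidenceFinset_eq_degree]
  have h : (Sgraph G).neighborFinset (Sum.inl u) =
      (G.incidenceFinset u).attach.map
        ⟨fun e => Sum.inr ⟨e.1, ((G.mem_incidenceFinset _ _).mp e.2).1⟩,
         by rintro ⟨e, he⟩ ⟨f, hf⟩ h; simpa using h⟩ := by
    ext x
    cases x with
    | inl v => rw [SimpleGraph.mem_neighborFinset]; simp [SimpleGraph.mem_neighborFinset, Sgraph]
    | inr e =>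
      rw [SimpleGraph.mem_neighborFinset]
      simp only [SimpleGraph.mem_neighborFinset, Sgraph, Finset.mem_map,
        Finset.mem_attach, Function.Embedding.coeFn_mk, true_and]
      constructor
      · intro hu
        exact ⟨⟨e.1, (G.mem_incidenceFinset _ _).mpr ⟨e.2, hu⟩⟩, rfl⟩
      · rintro ⟨⟨f, hf⟩, hfe⟩
        obtain rfl : f = (e : Sym2 α) := congrArg Subtype.val (Sum.inr.inj hfe)
        exact ((G.mem_incidenceFinset _ _).mp hf).2
  rw [h, Finset.card_map, Finset.card_attach]

lemma Sgraph_degree_inr {α : Type*} [Fintype α] (G : SimpleGraph α)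
    (e : G.edgeSet) : (Sgraph G).degree (Sum.inr e) = 2 := by
  classical
  obtain ⟨e, he⟩ := e
  induction e using Sym2.ind with
  | _ a b =>
    have hab : a ≠ b := (G.mem_edgeSet.mp he).ne
    rw [← SimpleGraph.card_neighborFinset_eq_degree]
    have h : (Sgraph G).neighborFinset (Sum.inr ⟨s(a, b), he⟩) =
        {Sum.inl a, Sum.inl b} := by
      ext x
      cases x with
      | inl v => rw [SimpleGraph.mem_neighborFinset]; show v ∈ s(a, b) ↔ _; simp [Sym2.mem_iff]
      | inr f => rw [SimpleGraph.mem_neighborFinset]; show False ↔ _; simp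
    rw [h]
    exact Finset.card_pair (by simpa using hab)

theorem Findex_Sgraph {α : Type*} [Fintype α] (G : SimpleGraph α) :
    Findex (Sgraph G) = Findex G + 8 * G.edgeFinset.card := by
  classical
  rw [Findex, Fintype.sum_sum_type]
  simp only [Sgraph_degree_inl, Sgraph_degree_inr]
  rw [Finset.sum_const, Finset.card_univ]
  rw [Findex, SimpleGraph.edgeFinset_card]
  ring
end

section
/- Let R(G) be the triangle parallel graph of G, obtained by replacing each edge of G by a triangle (i.e., adding a new vertex for each edge joined to both endpoints). Then F(R(G)) = 8F(G) + 8|E(G)|. -/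
open SimpleGraph Finset
open scoped Classical

lemma Rgraph_deg_inl {α : Type*} [Fintype α] (G : SimpleGraph α) (u : α) :
    (Rgraph G).degree (Sum.inl u) = 2 * G.degree u := by
  classical
  have hset : (Rgraph G).neighborFinset (Sum.inl u) =
      (G.neighborFinset u).image Sum.inl ∪
      (univ.filter (fun e : G.edgeSet => u ∈ (e : Sym2 α))).image Sum.inr := by
    ext x
    rcases x with v | e <;> rw [mem_neighborFinset] <;>
      simp [Rgraph, Sgraph, Ograph, mem_neighborFinset, sup_adj]
  have hdisj : Disjoint ((G.neighborFinset u).image Sum.inl)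
      ((univ.filter (fun e : G.edgeSet => u ∈ (e : Sym2 α))).image Sum.inr) := by
    simp [Finset.disjoint_left]
  have hcard : (univ.filter (fun e : G.edgeSet => u ∈ (e : Sym2 α))).card
      = G.degree u := by
    rw [← G.card_incidenceFinset_eq_degree u]
    refine Finset.card_bij (fun e _ => (e : Sym2 α)) ?_ ?_ ?_
    · intro e he
      simp only [mem_filter, mem_univ, true_and] at he
      simp [mem_incidenceFinset, incidenceSet, e.prop, he]
    · intro e _ f _ h
      exact Subtype.ext h
    · intro e he
      simp only [mem_incidenceFinset, incidenceSet] at he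
      exact ⟨⟨e, he.1⟩, by simp [he.2], rfl⟩
  rw [← card_neighborFinset_eq_degree, hset, Finset.card_union_of_disjoint hdisj,
    Finset.card_image_of_injective _ Sum.inl_injective,
    Finset.card_image_of_injective _ Sum.inr_injective, hcard,
    card_neighborFinset_eq_degree, two_mul]

lemma Rgraph_deg_inr {α : Type*} [Fintype α] (G : SimpleGraph α) (e : ↥G.edgeSet) :
    (Rgraph G).degree (Sum.inr e) = 2 := by
  classical
  obtain ⟨e, he⟩ := e
  induction e with
  | h a b =>
    have hab : G.Adj a b := G.mem_edgeSet.mp he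
    have hset : (Rgraph G).neighborFinset (Sum.inr ⟨s(a, b), he⟩)
        = {Sum.inl a, Sum.inl b} := by
      ext x
      rcases x with v | f <;> rw [mem_neighborFinset] <;>
        simp [Rgraph, Sgraph, Ograph, mem_neighborFinset, sup_adj, Sym2.mem_iff,
          or_comm]
    rw [← card_neighborFinset_eq_degree, hset]
    rw [Finset.card_insert_of_notMem (by simp [hab.ne]), Finset.card_singleton]

theorem Findex_Rgraph {α : Type*} [Fintype α] (G : SimpleGraph α) :
    Findex (Rgraph G) = 8 * Findex G + 8 * G.edgeFinset.card := by
  classical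
  rw [Findex, Fintype.sum_sum_type]
  simp only [Rgraph_deg_inl, Rgraph_deg_inr]
  have h1 : ∑ u : α, (2 * G.degree u) ^ 3 = 8 * Findex G := by
    rw [Findex, Finset.mul_sum]
    congr 1; ext u; ring
  have h2 : ∑ _e : ↥G.edgeSet, (2 : ℕ) ^ 3 = 8 * G.edgeFinset.card := by
    rw [Finset.sum_const, G.edgeFinset_card]
    simp [mul_comm]
  rw [h1, h2]
end

section
/- Let Q(G) be the line superposition graph of G, obtained by inserting a new vertex into each edge of G and joining with edges each pair of new vertices lying on adjacent edges of G. Then F(Q(G)) = F(G) + ξ₄(G) + 3·ReZG(G), where ξ₄(G)=Σ_{v∈V(G)} d_G(v)⁴ and ReZG(G)=Σ_{uv∈E(G)} d_G(u)d_G(v)[d_G(u)+d_G(v)]. -/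
open SimpleGraph Finset
open scoped Classical

section myhelpers
open SimpleGraph Finset
variable {α : Type*} [Fintype α] (G : SimpleGraph α)

lemma handshake_weighted (f : α → ℕ) :
    ∑ e ∈ G.edgeFinset, Sym2.lift ⟨fun u v => f u + f v, fun u v => by ring⟩ e
      = ∑ v, G.degree v * f v := by
  classical
  have h1 : ∑ d : G.Dart, f d.toProd.1 = ∑ v, G.degree v * f v := by
    rw [← Finset.sum_fiberwise_of_maps_to (g := fun d : G.Dart => d.toProd.1)
      (fun d _ => Finset.mem_univ _) (fun d => f d.toProd.1)]
    refine Finset.sum_congr rfl fun v _ => ?_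
    have hc : ∑ d ∈ filter (fun i : G.Dart => i.toProd.1 = v) univ, f d.toProd.1
        = ∑ _d ∈ filter (fun i : G.Dart => i.toProd.1 = v) univ, f v :=
      Finset.sum_congr rfl fun d hd => by rw [(Finset.mem_filter.1 hd).2]
    rw [hc, Finset.sum_const, smul_eq_mul, G.dart_fst_fiber_card_eq_degree]
  have h2 : ∑ d : G.Dart, f d.toProd.1
      = ∑ e ∈ G.edgeFinset, ∑ d ∈ univ.filter (fun d : G.Dart => d.edge = e), f d.toProd.1 := by
    rw [Finset.sum_fiberwise_of_maps_to (fun d _ => by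
      rw [mem_edgeFinset]; exact d.edge_mem)]
  rw [← h1, h2]
  refine Finset.sum_congr rfl fun e he => ?_
  rw [mem_edgeFinset] at he
  induction e using Sym2.ind with
  | _ u v =>
    let d : G.Dart := ⟨(u, v), he⟩
    have hf : (univ.filter fun d' : G.Dart => d'.edge = s(u, v)) = {d, d.symm} := d.edge_fiber
    rw [hf, Finset.sum_pair d.symm_ne.symm, Sym2.lift_mk]
    rfl

lemma deg_Q_inl (u : α) : (Qgraph G).degree (Sum.inl u) = G.degree u := by
  classical
  rw [degree, neighborFinset_eq_filter, Finset.card_filter, Fintype.sum_sum_type]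
  have h0 : ∀ a : α, ¬ (Qgraph G).Adj (Sum.inl u) (Sum.inl a) := by
    rintro a (h | h) <;> exact h
  have h1 : ∀ e : G.edgeSet, (Qgraph G).Adj (Sum.inl u) (Sum.inr e) ↔ u ∈ (e : Sym2 α) := by
    intro e
    constructor
    · rintro (h | h)
      · exact h
      · exact h.elim
    · exact fun h => Or.inl h
  simp only [h0, if_false, Finset.sum_const_zero, zero_add, h1]
  rw [Finset.sum_set_coe (f := fun e : Sym2 α => if u ∈ e then 1 else 0),
    ← Finset.card_filter, ← G.card_incidenceFinset_eq_degree u, incidenceFinset_eq_filter]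
  congr 1

lemma deg_Q_inr (u v : α) (h : s(u, v) ∈ G.edgeSet) :
    (Qgraph G).degree (Sum.inr ⟨s(u, v), h⟩) = G.degree u + G.degree v := by
  classical
  have hadj : G.Adj u v := G.mem_edgeSet.1 h
  have huv : u ≠ v := hadj.ne
  rw [degree, neighborFinset_eq_filter, Finset.card_filter, Fintype.sum_sum_type]
  have h0 : ∀ a : α, (Qgraph G).Adj (Sum.inr ⟨s(u, v), h⟩) (Sum.inl a) ↔ a ∈ s(u, v) := by
    intro a
    constructor
    · rintro (hh | hh)
      · exact hh
      · exact hh.elim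
    · exact Or.inl
  have h1 : ∀ f : G.edgeSet, (Qgraph G).Adj (Sum.inr ⟨s(u, v), h⟩) (Sum.inr f) ↔
      ((f : Sym2 α) ≠ s(u, v) ∧ (u ∈ (f : Sym2 α) ∨ v ∈ (f : Sym2 α))) := by
    intro f
    constructor
    · rintro (hh | ⟨hne, w, hw1, hw2⟩)
      · exact hh.elim
      · refine ⟨fun hc => hne (Subtype.ext hc.symm), ?_⟩
        rcases Sym2.mem_iff.1 hw1 with rfl | rfl
        · exact Or.inl hw2
        · exact Or.inr hw2
    · rintro ⟨hne, hw⟩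
      refine Or.inr ⟨fun hc => hne ((congrArg Subtype.val hc).symm), ?_⟩
      rcases hw with hw | hw
      · exact ⟨u, Sym2.mem_mk_left u v, hw⟩
      · exact ⟨v, Sym2.mem_mk_right u v, hw⟩
  simp only [h0, h1]
  rw [← Finset.card_filter,
    Finset.sum_set_coe (f := fun g : Sym2 α =>
      if (g ≠ s(u, v) ∧ (u ∈ g ∨ v ∈ g)) then 1 else 0),
    ← Finset.card_filter]
  have hS : (Set.toFinset G.edgeSet).filter (fun g => g ≠ s(u, v) ∧ (u ∈ g ∨ v ∈ g))
      = (G.incidenceFinset u ∪ G.incidenceFinset v).erase s(u, v) := by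
    rw [incidenceFinset_eq_filter, incidenceFinset_eq_filter, ← Finset.filter_or]
    ext g
    simp only [Finset.mem_filter, Finset.mem_erase, mem_edgeFinset, Set.mem_toFinset]
    tauto
  have hAB : univ.filter (fun a => a ∈ s(u, v)) = ({u, v} : Finset α) := by
    ext a
    simp [Sym2.mem_iff]
  have hmem : s(u, v) ∈ G.incidenceFinset u ∪ G.incidenceFinset v := by
    rw [Finset.mem_union, incidenceFinset_eq_filter]
    exact Or.inl (Finset.mem_filter.2 ⟨mem_edgeFinset.2 h, Sym2.mem_mk_left u v⟩)
  have hinter : G.incidenceFinset u ∩ G.incidenceFinset v = {s(u, v)} := by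
    ext g
    rw [Finset.mem_inter, incidenceFinset_eq_filter, incidenceFinset_eq_filter,
      Finset.mem_filter, Finset.mem_filter, Finset.mem_singleton]
    constructor
    · rintro ⟨⟨_, hg2⟩, _, hg3⟩
      exact (Sym2.mem_and_mem_iff huv).1 ⟨hg2, hg3⟩
    · rintro rfl
      exact ⟨⟨mem_edgeFinset.2 h, Sym2.mem_mk_left u v⟩,
        mem_edgeFinset.2 h, Sym2.mem_mk_right u v⟩
  have hc1 : #((G.incidenceFinset u ∪ G.incidenceFinset v).erase s(u, v)) + 1
      = #(G.incidenceFinset u ∪ G.incidenceFinset v) := Finset.card_erase_add_one hmem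
  have hc2 : #(G.incidenceFinset u ∪ G.incidenceFinset v)
      + #(G.incidenceFinset u ∩ G.incidenceFinset v)
      = #(G.incidenceFinset u) + #(G.incidenceFinset v) :=
    Finset.card_union_add_card_inter _ _
  rw [hinter, Finset.card_singleton, G.card_incidenceFinset_eq_degree,
    G.card_incidenceFinset_eq_degree] at hc2
  rw [hS, hAB, Finset.card_pair huv]
  omega

end myhelpers
theorem Findex_Qgraph {α : Type*} [Fintype α] (G : SimpleGraph α) :
    Findex (Qgraph G) = Findex G + xiIndex G 4 + 3 * ReZG G := by
  classical
  rw [Findex, Fintype.sum_sum_type]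
  have hD : ∀ e : G.edgeSet, (Qgraph G).degree (Sum.inr e)
      = Sym2.lift ⟨fun a b => G.degree a + G.degree b, fun a b => by ring⟩ (e : Sym2 α) := by
    rintro ⟨e, he⟩
    induction e using Sym2.ind with
    | _ a b => rw [deg_Q_inr G a b he, Sym2.lift_mk]
  have h1 : ∑ u, (Qgraph G).degree (Sum.inl u) ^ 3 = Findex G :=
    Finset.sum_congr rfl fun u _ => by rw [deg_Q_inl]
  have h2 : ∑ e : G.edgeSet, (Qgraph G).degree (Sum.inr e) ^ 3
      = ∑ g ∈ G.edgeFinset,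
        (Sym2.lift ⟨fun a b => G.degree a + G.degree b, fun a b => by ring⟩ g) ^ 3 := by
    rw [Finset.sum_congr rfl fun e _ => by rw [hD e]]
    refine (Finset.sum_set_coe (s := G.edgeSet)
      (f := fun g => (Sym2.lift ⟨fun a b => G.degree a + G.degree b,
        fun a b => by ring⟩ g) ^ 3)).trans ?_
    rw [edgeFinset]
  have h3 : ∑ g ∈ G.edgeFinset,
        (Sym2.lift ⟨fun a b => G.degree a + G.degree b, fun a b => by ring⟩ g) ^ 3
      = ∑ g ∈ G.edgeFinset,
        (Sym2.lift ⟨fun a b => G.degree a ^ 3 + G.degree b ^ 3, fun a b => by ring⟩ g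
          + 3 * Sym2.lift ⟨fun a b =>
              G.degree a * G.degree b * (G.degree a + G.degree b), fun a b => by ring⟩ g) := by
    refine Finset.sum_congr rfl fun g _ => ?_
    induction g using Sym2.ind with
    | _ a b =>
      simp only [Sym2.lift_mk]
      ring
  rw [h1, h2, h3, Finset.sum_add_distrib, ← Finset.mul_sum,
    handshake_weighted G (fun v => G.degree v ^ 3)]
  have h4 : ∑ v, G.degree v * G.degree v ^ 3 = xiIndex G 4 :=
    Finset.sum_congr rfl fun v _ => (pow_succ' _ _).symm
  rw [h4, ReZG]
  ring
end

section
/- Let G and H be connected graphs, with |V(G)|≥2. Then F(G+_S H) = |V(H)|F(G) + |V(G)|F(H) + 6|E(H)|M₁(G) + 6|E(G)|M₁(H) + 8|V(H)||E(G)|, where G+_S H is the S-sum of G and H. -/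
open SimpleGraph Finset
open scoped Classical

section FindexAux
variable {α β : Type*} [Fintype α] [Fintype β] {G : SimpleGraph α} {H : SimpleGraph β}

lemma Sgraph_deg_inl (u : α) : (Sgraph G).degree (Sum.inl u) = G.degree u := by
  classical
  rw [← SimpleGraph.card_neighborSet_eq_degree, ← SimpleGraph.card_incidenceSet_eq_degree]
  refine (Fintype.card_congr (Equiv.ofBijective
    (fun e => ⟨Sum.inr ⟨e.1, e.2.1⟩, e.2.2⟩ :
      G.incidenceSet u → (Sgraph G).neighborSet (Sum.inl u)) ⟨?_, ?_⟩)).symm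
  · rintro ⟨e, he⟩ ⟨f, hf⟩ h
    simp only [Subtype.mk.injEq, Sum.inr.injEq] at h
    exact Subtype.ext (by simpa using congrArg Subtype.val h)
  · rintro ⟨(v | ⟨e, he⟩), hx⟩
    · exact absurd hx (by simp [Sgraph, SimpleGraph.neighborSet])
    · exact ⟨⟨e, he, hx⟩, rfl⟩

lemma Sgraph_deg_inr (e : G.edgeSet) : (Sgraph G).degree (Sum.inr e) = 2 := by
  classical
  obtain ⟨e, he⟩ := e
  induction e with
  | _ a b =>
    have hab : a ≠ b := (G.mem_edgeSet.mp he).ne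
    rw [← SimpleGraph.card_neighborFinset_eq_degree]
    have : (Sgraph G).neighborFinset (Sum.inr ⟨s(a,b), he⟩) =
        {Sum.inl a, Sum.inl b} := by
      ext x
      cases x with
      | inl v => simp only [SimpleGraph.mem_neighborFinset]; simp [Sgraph, or_comm]
      | inr f => simp only [SimpleGraph.mem_neighborFinset]; simp [Sgraph]
    rw [this, Finset.card_insert_of_notMem (by simp [hab]), Finset.card_singleton]

lemma FSum_deg_inl (u : α) (w : β) :
    (FSum (Sgraph G) H).degree (Sum.inl u, w) = G.degree u + H.degree w := by
  classical
  rw [← SimpleGraph.card_neighborFinset_eq_degree]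
  have hset : (FSum (Sgraph G) H).neighborFinset (Sum.inl u, w) =
      ((Sgraph G).neighborFinset (Sum.inl u)) ×ˢ {w} ∪
        ({(Sum.inl u : α ⊕ ↥G.edgeSet)} ×ˢ H.neighborFinset w) := by
    ext ⟨y, z⟩
    simp only [SimpleGraph.mem_neighborFinset]
    simp only [SimpleGraph.mem_neighborFinset, FSum, hierProd, Finset.mem_union,
      Finset.mem_product, Finset.mem_singleton, Set.mem_range]
    constructor
    · rintro (⟨h1, _, h3⟩ | ⟨h1, h2⟩)
      · exact Or.inr ⟨h1.symm, h3⟩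
      · exact Or.inl ⟨h2, h1.symm⟩
    · rintro (⟨h1, h2⟩ | ⟨h1, h2⟩)
      · exact Or.inr ⟨h2.symm, h1⟩
      · exact Or.inl ⟨h1.symm, ⟨u, rfl⟩, h2⟩
  rw [hset, Finset.card_union_of_disjoint, Finset.card_product, Finset.card_product]
  · simp [Sgraph_deg_inl]
  · rw [Finset.disjoint_left]
    rintro ⟨y, z⟩ hy hz
    simp only [Finset.mem_product, Finset.mem_singleton, SimpleGraph.mem_neighborFinset] at hy hz
    exact (Sgraph G).loopless.irrefl _ (hz.1 ▸ hy.1)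

lemma FSum_deg_inr (e : G.edgeSet) (w : β) :
    (FSum (Sgraph G) H).degree (Sum.inr e, w) = 2 := by
  classical
  rw [← SimpleGraph.card_neighborFinset_eq_degree]
  have hset : (FSum (Sgraph G) H).neighborFinset (Sum.inr e, w) =
      ((Sgraph G).neighborFinset (Sum.inr e)) ×ˢ {w} := by
    ext ⟨y, z⟩
    simp only [SimpleGraph.mem_neighborFinset]
    simp only [SimpleGraph.mem_neighborFinset, FSum, hierProd, Finset.mem_product,
      Finset.mem_singleton, Set.mem_range]
    constructor
    · rintro (⟨_, ⟨u, hu⟩, _⟩ | ⟨h1, h2⟩)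
      · exact absurd hu (by simp)
      · exact ⟨h2, h1.symm⟩
    · rintro ⟨h1, h2⟩
      exact Or.inr ⟨h2.symm, h1⟩
  rw [hset, Finset.card_product]
  simp [Sgraph_deg_inr]

end FindexAux

theorem Findex_Ssum {α β : Type*} [Fintype α] [Fintype β]
    (G : SimpleGraph α) (H : SimpleGraph β)
    (hcard : 2 ≤ Fintype.card α) (hG : G.Connected) (hH : H.Connected) :
    Findex (FSum (Sgraph G) H) =
      Fintype.card β * Findex G + Fintype.card α * Findex H
        + 6 * H.edgeFinset.card * M1 G + 6 * G.edgeFinset.card * M1 H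
        + 8 * Fintype.card β * G.edgeFinset.card := by
  classical
  rw [Findex, Findex, Findex, M1, M1]
  rw [Fintype.sum_prod_type, Fintype.sum_sum_type]
  simp only [FSum_deg_inl, FSum_deg_inr]
  have hH2 : ∑ w : β, H.degree w = 2 * H.edgeFinset.card := H.sum_degrees_eq_twice_card_edges
  have hG2 : ∑ u : α, G.degree u = 2 * G.edgeFinset.card := G.sum_degrees_eq_twice_card_edges
  have key : ∀ u : α, ∑ w : β, (G.degree u + H.degree w) ^ 3 =
      Fintype.card β * G.degree u ^ 3 + 6 * H.edgeFinset.card * G.degree u ^ 2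
        + 3 * G.degree u * (∑ w, H.degree w ^ 2) + ∑ w, H.degree w ^ 3 := by
    intro u
    calc ∑ w : β, (G.degree u + H.degree w) ^ 3
        = ∑ w : β, (G.degree u ^ 3 + 3 * G.degree u ^ 2 * H.degree w
            + 3 * G.degree u * H.degree w ^ 2 + H.degree w ^ 3) := by
          exact Finset.sum_congr rfl fun w _ => by ring
      _ = _ := by
          rw [Finset.sum_add_distrib, Finset.sum_add_distrib, Finset.sum_add_distrib,
            Finset.sum_const, ← Finset.mul_sum, ← Finset.mul_sum, hH2, Finset.card_univ,
            smul_eq_mul]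
          ring
  simp_rw [key]
  rw [Finset.sum_add_distrib, Finset.sum_add_distrib, Finset.sum_add_distrib,
    Finset.sum_const, ← Finset.mul_sum, ← Finset.mul_sum, ← Finset.sum_mul, ← Finset.mul_sum,
    hG2, Finset.card_univ, Finset.sum_const, Finset.sum_const, Finset.card_univ,
    Finset.card_univ]
  have hcardE : Fintype.card ↥G.edgeSet = G.edgeFinset.card := by
    rw [SimpleGraph.edgeFinset, Set.toFinset_card]
  rw [hcardE]
  simp only [smul_eq_mul]
  ring
end

section
/- Let G and H be connected graphs, with |V(G)|≥2. Then F(G+_R H) = 8|V(H)|F(G) + |V(G)|F(H) + 24|E(H)|M₁(G) + 12|E(G)|M₁(H) + 8|V(H)||E(G)|, where G+_R H is the R-sum of G and H. -/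
open SimpleGraph Finset
open scoped Classical

section Aux

variable {α β : Type*} [Fintype α] [Fintype β]

private lemma deg_as_sum (K : SimpleGraph α) (v : α) :
    K.degree v = ∑ q, if K.Adj v q then 1 else 0 := by
  classical
  rw [← SimpleGraph.card_neighborFinset_eq_degree,
    SimpleGraph.neighborFinset_eq_filter, Finset.card_filter]

private lemma deg_FSum {G : SimpleGraph α} (K : SimpleGraph (α ⊕ ↥G.edgeSet))
    (H : SimpleGraph β) (x : α ⊕ ↥G.edgeSet) (w : β) :
    (FSum K H).degree (x, w)
      = (if x ∈ Set.range Sum.inl then H.degree w else 0) + K.degree x := by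
  classical
  rw [deg_as_sum, Fintype.sum_prod_type]
  have hA : ∀ y : α ⊕ ↥G.edgeSet,
      (∑ z, if x = y ∧ x ∈ Set.range Sum.inl ∧ H.Adj w z then (1:ℕ) else 0)
        = if x = y then (if x ∈ Set.range Sum.inl then H.degree w else 0) else 0 := by
    intro y
    by_cases h1 : x = y
    · by_cases h2 : x ∈ Set.range Sum.inl
      · rw [if_pos h1, if_pos h2, deg_as_sum]
        exact Finset.sum_congr rfl fun z _ =>
          if_congr ⟨fun h => h.2.2, fun h => ⟨h1, h2, h⟩⟩ rfl rfl
      · rw [if_pos h1, if_neg h2]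
        exact Finset.sum_eq_zero fun z _ => if_neg (by tauto)
    · rw [if_neg h1]
      exact Finset.sum_eq_zero fun z _ => if_neg (by tauto)
  have hB : ∀ y : α ⊕ ↥G.edgeSet,
      (∑ z, if w = z ∧ K.Adj x y then (1:ℕ) else 0) = if K.Adj x y then 1 else 0 := by
    intro y
    by_cases h : K.Adj x y
    · rw [if_pos h,
        Finset.sum_congr rfl (fun z _ => if_congr (and_iff_left h) rfl rfl)]
      simp [Finset.sum_ite_eq]
    · rw [if_neg h]
      exact Finset.sum_eq_zero fun z _ => if_neg (by tauto)
  have key : ∀ (y : α ⊕ ↥G.edgeSet) (z : β),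
      (if (FSum K H).Adj (x, w) (y, z) then (1:ℕ) else 0)
        = (if x = y ∧ x ∈ Set.range Sum.inl ∧ H.Adj w z then 1 else 0)
          + (if w = z ∧ K.Adj x y then 1 else 0) := by
    intro y z
    have hadj : (FSum K H).Adj (x, w) (y, z)
        ↔ (x = y ∧ x ∈ Set.range Sum.inl ∧ H.Adj w z) ∨ (w = z ∧ K.Adj x y) :=
      Iff.rfl
    have hdisj : ¬((x = y ∧ x ∈ Set.range Sum.inl ∧ H.Adj w z)
        ∧ (w = z ∧ K.Adj x y)) := by
      rintro ⟨⟨hxy, -, -⟩, -, hK⟩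
      exact K.loopless.irrefl x (hxy ▸ hK)
    rw [if_congr hadj rfl rfl]
    by_cases hP : x = y ∧ x ∈ Set.range Sum.inl ∧ H.Adj w z
    · rw [if_pos (Or.inl hP), if_pos hP, if_neg fun hQ => hdisj ⟨hP, hQ⟩]
    · by_cases hQ : w = z ∧ K.Adj x y
      · rw [if_pos (Or.inr hQ), if_neg hP, if_pos hQ]
      · rw [if_neg (by tauto), if_neg hP, if_neg hQ]
  simp only [key, Finset.sum_add_distrib, hA, hB, Finset.sum_ite_eq]
  simp [(deg_as_sum K x).symm]

private lemma Rdeg_inl (G : SimpleGraph α) (u : α) :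
    (Rgraph G).degree (Sum.inl u) = 2 * G.degree u := by
  classical
  rw [deg_as_sum, Fintype.sum_sum_type]
  have h1 : (∑ v : α, if (Rgraph G).Adj (Sum.inl u) (Sum.inl v) then (1:ℕ) else 0)
      = G.degree u := by
    rw [deg_as_sum]
    refine Finset.sum_congr rfl fun v _ => ?_
    simp [Rgraph, Sgraph, Ograph, SimpleGraph.sup_adj]
  have h2 : (∑ e : ↥G.edgeSet, if (Rgraph G).Adj (Sum.inl u) (Sum.inr e) then (1:ℕ) else 0)
      = G.degree u := by
    have : (∑ e : ↥G.edgeSet, if (Rgraph G).Adj (Sum.inl u) (Sum.inr e) then (1:ℕ) else 0)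
        = (Finset.univ.filter fun e : ↥G.edgeSet => u ∈ (e : Sym2 α)).card := by
      rw [Finset.card_filter]
      refine Finset.sum_congr rfl fun e _ => ?_
      simp [Rgraph, Sgraph, Ograph, SimpleGraph.sup_adj]
    rw [this, ← SimpleGraph.card_incidenceFinset_eq_degree,
      SimpleGraph.incidenceFinset_eq_filter]
    apply Finset.card_bij (fun (e : ↥G.edgeSet) _ => (e : Sym2 α))
    · intro e he
      simp only [Finset.mem_filter, Finset.mem_univ, true_and] at he ⊢
      exact ⟨SimpleGraph.mem_edgeFinset.2 e.2, he⟩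
    · intro e _ f _ hef
      exact Subtype.ext hef
    · intro e he
      simp only [Finset.mem_filter, SimpleGraph.mem_edgeFinset] at he
      exact ⟨⟨e, he.1⟩, by simp [he.2], rfl⟩
  omega
  
private lemma Rdeg_inr (G : SimpleGraph α) (e : ↥G.edgeSet) :
    (Rgraph G).degree (Sum.inr e) = 2 := by
  classical
  rw [deg_as_sum, Fintype.sum_sum_type]
  have h2 : (∑ f : ↥G.edgeSet, if (Rgraph G).Adj (Sum.inr e) (Sum.inr f) then (1:ℕ) else 0)
      = 0 := by
    refine Finset.sum_eq_zero fun f _ => ?_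
    simp [Rgraph, Sgraph, Ograph, SimpleGraph.sup_adj]
  obtain ⟨e, he⟩ := e
  induction e using Sym2.ind with
  | _ a b =>
    have hab : a ≠ b := (G.mem_edgeSet.1 he).ne
    have h1 : (∑ v : α, if (Rgraph G).Adj (Sum.inr ⟨s(a, b), he⟩) (Sum.inl v) then (1:ℕ) else 0)
        = 2 := by
      have : ∀ v : α, ((Rgraph G).Adj (Sum.inr ⟨s(a, b), he⟩) (Sum.inl v)) ↔ v = a ∨ v = b := by
        intro v
        simp [Rgraph, Sgraph, Ograph, SimpleGraph.sup_adj, Sym2.mem_iff]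
      rw [← Finset.card_filter]
      have : (Finset.univ.filter fun v : α =>
          (Rgraph G).Adj (Sum.inr ⟨s(a, b), he⟩) (Sum.inl v)) = {a, b} := by
        ext v; simp [this]
      rw [this, Finset.card_insert_of_notMem (by simp [hab]), Finset.card_singleton]
    omega

end Aux

theorem Findex_Rsum {α β : Type*} [Fintype α] [Fintype β]
    (G : SimpleGraph α) (H : SimpleGraph β)
    (hcard : 2 ≤ Fintype.card α) (hG : G.Connected) (hH : H.Connected) :
    Findex (FSum (Rgraph G) H) =
      8 * Fintype.card β * Findex G + Fintype.card α * Findex H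
        + 24 * H.edgeFinset.card * M1 G + 12 * G.edgeFinset.card * M1 H
        + 8 * Fintype.card β * G.edgeFinset.card := by
  classical
  have hsum : Findex (FSum (Rgraph G) H)
      = (∑ u : α, ∑ w : β, (H.degree w + 2 * G.degree u) ^ 3)
        + (∑ _e : ↥G.edgeSet, ∑ _w : β, 8) := by
    unfold Findex
    rw [Fintype.sum_prod_type, Fintype.sum_sum_type]
    congr 1
    · refine Finset.sum_congr rfl fun u _ => Finset.sum_congr rfl fun w _ => ?_
      rw [deg_FSum, Rdeg_inl]
      simp
    · refine Finset.sum_congr rfl fun e _ => Finset.sum_congr rfl fun w _ => ?_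
      rw [deg_FSum, Rdeg_inr]
      simp
  have h2 : (∑ _e : ↥G.edgeSet, ∑ _w : β, (8:ℕ))
      = G.edgeFinset.card * Fintype.card β * 8 := by
    rw [Finset.sum_const, Finset.sum_const, Finset.card_univ, Finset.card_univ,
      smul_eq_mul, smul_eq_mul, ← SimpleGraph.edgeFinset_card]
    ring
  have h1 : (∑ u : α, ∑ w : β, (H.degree w + 2 * G.degree u) ^ 3)
      = Fintype.card α * Findex H + 12 * G.edgeFinset.card * M1 H
        + 24 * H.edgeFinset.card * M1 G + 8 * Fintype.card β * Findex G := by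
    have inner : ∀ u : α, (∑ w : β, (H.degree w + 2 * G.degree u) ^ 3)
        = Findex H + G.degree u * (6 * M1 H)
          + G.degree u ^ 2 * (12 * (2 * H.edgeFinset.card))
          + G.degree u ^ 3 * (8 * Fintype.card β) := by
      intro u
      have expand : ∀ a b : ℕ, (a + 2 * b) ^ 3
          = a ^ 3 + b * (6 * a ^ 2) + b ^ 2 * (12 * a) + 8 * b ^ 3 := by
        intros; ring
      simp only [expand, Finset.sum_add_distrib, ← Finset.mul_sum, Finset.sum_const,
        Finset.card_univ, smul_eq_mul]
      rw [SimpleGraph.sum_degrees_eq_twice_card_edges]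
      unfold Findex M1
      ring
    simp only [inner, Finset.sum_add_distrib, Finset.sum_const, Finset.card_univ,
      smul_eq_mul, ← Finset.sum_mul]
    rw [SimpleGraph.sum_degrees_eq_twice_card_edges]
    unfold Findex M1
    ring
  rw [hsum, h1, h2]
  ring
end

section
/- The linear hexagonal chain L_n, which is isomorphic to P_{n+1} +_S P₂ (n≥2), has F-index equal to 70n − 22. -/
open SimpleGraph Finset
open scoped Classical

noncomputable section

section Aux

variable {α β : Type*}

lemma degree_hierProd [Fintype α] [Fintype β] (G : SimpleGraph α) (H : SimpleGraph β)
    (U : Set α) (x : α) (v : β) :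
    (hierProd G H U).degree (x, v) =
      G.degree x + if x ∈ U then H.degree v else 0 := by
  classical
  have key : (hierProd G H U).neighborFinset (x, v) =
      ((G.neighborFinset x).image fun y => (y, v)) ∪
        (if x ∈ U then (H.neighborFinset v).image (fun w => (x, w)) else ∅) := by
    ext ⟨y, w⟩
    rw [mem_neighborFinset]
    by_cases hx : x ∈ U <;>
      simp only [mem_neighborFinset, hierProd, mem_union, mem_image, hx, if_true, if_false,
        Finset.notMem_empty, or_false, Prod.mk.injEq] <;>
      aesop
  have hdisj : Disjoint ((G.neighborFinset x).image fun y => (y, v))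
      (if x ∈ U then (H.neighborFinset v).image (fun w => (x, w)) else ∅) := by
    split_ifs
    · rw [Finset.disjoint_left]
      rintro ⟨y, w⟩ h1 h2
      simp only [mem_image, mem_neighborFinset, Prod.mk.injEq] at h1 h2
      obtain ⟨y', hy', rfl, rfl⟩ := h1
      obtain ⟨w', hw', rfl, rfl⟩ := h2
      exact H.ne_of_adj hw' rfl
    · exact Finset.disjoint_empty_right _
  rw [← card_neighborFinset_eq_degree, key, Finset.card_union_of_disjoint hdisj,
    Finset.card_image_of_injective _ (fun a b h => (Prod.mk.injEq _ _ _ _ ▸ h).1),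
    apply_ite Finset.card,
    Finset.card_image_of_injective _ (fun a b h => (Prod.mk.injEq _ _ _ _ ▸ h).2)]
  simp [card_neighborFinset_eq_degree]

lemma degree_Sgraph_inl [Fintype α] [DecidableEq α] (G : SimpleGraph α) (a : α) :
    (Sgraph G).degree (Sum.inl a) = G.degree a := by
  classical
  have key : (Sgraph G).neighborFinset (Sum.inl a) =
      (Finset.univ.filter fun e : G.edgeSet => a ∈ (e : Sym2 α)).image Sum.inr := by
    ext x
    cases x <;> rw [mem_neighborFinset] <;> simp [Sgraph]
  rw [← card_neighborFinset_eq_degree, key,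
    Finset.card_image_of_injective _ Sum.inr_injective, ← Fintype.card_subtype,
    ← G.card_incidenceSet_eq_degree a]
  exact Fintype.card_congr ((Equiv.subtypeSubtypeEquivSubtypeInter
    (· ∈ G.edgeSet) (a ∈ ·)).trans (Equiv.subtypeEquivRight (by
      intro e; simp [SimpleGraph.incidenceSet])))

lemma degree_Sgraph_inr [Fintype α] [DecidableEq α] (G : SimpleGraph α) (e : G.edgeSet) :
    (Sgraph G).degree (Sum.inr e) = 2 := by
  classical
  have key : (Sgraph G).neighborFinset (Sum.inr e) =
      (Finset.univ.filter fun u : α => u ∈ (e : Sym2 α)).image Sum.inl := by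
    ext x
    cases x <;> rw [mem_neighborFinset] <;> simp [Sgraph]
  rw [← card_neighborFinset_eq_degree, key,
    Finset.card_image_of_injective _ Sum.inl_injective]
  obtain ⟨e, he⟩ := e
  induction e with
  | _ x y =>
    have hxy : x ≠ y := G.ne_of_adj he
    have : (Finset.univ.filter fun u : α => u ∈ (s(x, y) : Sym2 α)) = {x, y} := by
      ext u; simp [Sym2.mem_iff]
    rw [this, Finset.card_insert_of_notMem (by simp [hxy]), Finset.card_singleton]

lemma degree_pathGraph (n : ℕ) (a : Fin (n + 1)) :
    (pathGraph (n + 1)).degree a =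
      (if a.val = 0 then 0 else 1) + (if a.val = n then 0 else 1) := by
  classical
  have ha := a.isLt
  rw [← card_neighborFinset_eq_degree, neighborFinset_eq_filter]
  have hsplit : (Finset.univ.filter ((pathGraph (n + 1)).Adj a)) =
      (Finset.univ.filter fun b : Fin (n + 1) => b.val + 1 = a.val) ∪
        (Finset.univ.filter fun b : Fin (n + 1) => a.val + 1 = b.val) := by
    ext b
    simp only [Finset.mem_filter, Finset.mem_union, Finset.mem_univ, true_and, pathGraph_adj]
    omega
  have hdisj : Disjoint (Finset.univ.filter fun b : Fin (n + 1) => b.val + 1 = a.val)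
      (Finset.univ.filter fun b : Fin (n + 1) => a.val + 1 = b.val) := by
    rw [Finset.disjoint_left]
    intro b h1 h2
    simp only [Finset.mem_filter] at h1 h2
    omega
  rw [hsplit, Finset.card_union_of_disjoint hdisj]
  congr 1
  · by_cases h : a.val = 0
    · rw [if_pos h, Finset.card_eq_zero, Finset.eq_empty_iff_forall_notMem]
      intro b; simp only [Finset.mem_filter, Finset.mem_univ, true_and]; omega
    · rw [if_neg h, Finset.card_eq_one]
      refine ⟨⟨a.val - 1, by omega⟩, ?_⟩
      ext b
      simp only [Finset.mem_filter, Finset.mem_univ, true_and, Finset.mem_singleton,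
        Fin.ext_iff]
      omega
  · by_cases h : a.val = n
    · rw [if_pos h, Finset.card_eq_zero, Finset.eq_empty_iff_forall_notMem]
      intro b; have := b.isLt
      simp only [Finset.mem_filter, Finset.mem_univ, true_and]; omega
    · rw [if_neg h, Finset.card_eq_one]
      refine ⟨⟨a.val + 1, by omega⟩, ?_⟩
      ext b
      simp only [Finset.mem_filter, Finset.mem_univ, true_and, Finset.mem_singleton,
        Fin.ext_iff]
      omega

lemma sum_over_path (m : ℕ) (f : ℕ → ℕ) :
    ∑ a : Fin (m + 2), f ((pathGraph (m + 2)).degree a) = 2 * f 1 + m * f 2 := by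
  classical
  have hpt : ∀ a : Fin (m + 2), f ((pathGraph (m + 2)).degree a) =
      (fun i : ℕ => f ((if i = 0 then 0 else 1) + (if i = m + 1 then 0 else 1))) a.val := by
    intro a
    rw [degree_pathGraph (m + 1) a]
  rw [Finset.sum_congr rfl fun a _ => hpt a,
    Fin.sum_univ_eq_sum_range
      (fun i : ℕ => f ((if i = 0 then 0 else 1) + (if i = m + 1 then 0 else 1))) (m + 2),
    Finset.sum_range_succ, Finset.sum_range_succ']
  have h0 : f ((if (0 : ℕ) = 0 then 0 else 1) + (if (0 : ℕ) = m + 1 then 0 else 1)) = f 1 := by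
    rw [if_pos rfl, if_neg (by omega)]
  have hlast : f ((if m + 1 = 0 then 0 else 1) + (if m + 1 = m + 1 then 0 else 1)) = f 1 := by
    rw [if_neg (by omega), if_pos rfl]
  have hmid : ∀ i ∈ Finset.range m,
      f ((if i + 1 = 0 then 0 else 1) + (if i + 1 = m + 1 then 0 else 1)) = f 2 := by
    intro i hi
    rw [Finset.mem_range] at hi
    rw [if_neg (by omega), if_neg (by omega)]
  rw [Finset.sum_congr rfl hmid, Finset.sum_const, h0, hlast, smul_eq_mul, Finset.card_range]
  ring

lemma sum_over_path' (n : ℕ) (hn : 1 ≤ n) (f : ℕ → ℕ) :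
    ∑ a : Fin (n + 1), f ((pathGraph (n + 1)).degree a) = 2 * f 1 + (n - 1) * f 2 := by
  obtain ⟨m, rfl⟩ : ∃ m, n = m + 1 := ⟨n - 1, by omega⟩
  simpa using sum_over_path m f

lemma card_edgeSet_pathGraph (n : ℕ) (hn : 1 ≤ n) :
    Fintype.card (pathGraph (n + 1)).edgeSet = n := by
  classical
  have h2 : ∑ a : Fin (n + 1), (pathGraph (n + 1)).degree a =
      2 * (pathGraph (n + 1)).edgeFinset.card :=
    SimpleGraph.sum_degrees_eq_twice_card_edges _
  have h3 : ∑ a : Fin (n + 1), (pathGraph (n + 1)).degree a = 2 * 1 + (n - 1) * 2 := by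
    simpa using sum_over_path' n hn id
  have h4 : (pathGraph (n + 1)).edgeFinset.card = n := by omega
  rwa [SimpleGraph.edgeFinset_card] at h4

end Aux

end
theorem Findex_linear_hexagonal_chain (n : ℕ) (hn : 2 ≤ n) :
    (Findex (FSum (Sgraph (pathGraph (n + 1))) (pathGraph 2)) : ℤ) =
      70 * n - 22 := by
  classical
  have h1 : 1 ≤ n := by omega
  have hdegH : ∀ v : Fin 2, (pathGraph 2).degree v = 1 := by
    intro v
    have hv := v.isLt
    rw [degree_pathGraph 1 v]
    split_ifs <;> omega
  have hdeg_inl : ∀ (a : Fin (n + 1)) (v : Fin 2),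
      (FSum (Sgraph (pathGraph (n + 1))) (pathGraph 2)).degree (Sum.inl a, v) =
        (pathGraph (n + 1)).degree a + 1 := by
    intro a v
    rw [FSum, degree_hierProd, degree_Sgraph_inl, if_pos ⟨a, rfl⟩, hdegH]
  have hdeg_inr : ∀ (e : (pathGraph (n + 1)).edgeSet) (v : Fin 2),
      (FSum (Sgraph (pathGraph (n + 1))) (pathGraph 2)).degree (Sum.inr e, v) = 2 := by
    intro e v
    rw [FSum, degree_hierProd, degree_Sgraph_inr, if_neg (by simp)]
  have key : Findex (FSum (Sgraph (pathGraph (n + 1))) (pathGraph 2)) =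
      2 * (2 * 8 + (n - 1) * 27) + n * 16 := by
    rw [Findex, Fintype.sum_prod_type, Fintype.sum_sum_type]
    have hA : ∑ a : Fin (n + 1), ∑ v : Fin 2,
        (FSum (Sgraph (pathGraph (n + 1))) (pathGraph 2)).degree (Sum.inl a, v) ^ 3 =
          2 * (2 * 8 + (n - 1) * 27) := by
      have : ∀ a : Fin (n + 1), ∑ v : Fin 2,
          (FSum (Sgraph (pathGraph (n + 1))) (pathGraph 2)).degree (Sum.inl a, v) ^ 3 =
            2 * ((fun d => (d + 1) ^ 3) ((pathGraph (n + 1)).degree a)) := by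
        intro a
        simp [hdeg_inl a, Finset.sum_const]
      rw [Finset.sum_congr rfl fun a _ => this a, ← Finset.mul_sum,
        sum_over_path' n h1 (fun d => (d + 1) ^ 3)]
      norm_num
    have hB : ∑ e : (pathGraph (n + 1)).edgeSet, ∑ v : Fin 2,
        (FSum (Sgraph (pathGraph (n + 1))) (pathGraph 2)).degree (Sum.inr e, v) ^ 3 =
          n * 16 := by
      have : ∀ e : (pathGraph (n + 1)).edgeSet, ∑ v : Fin 2,
          (FSum (Sgraph (pathGraph (n + 1))) (pathGraph 2)).degree (Sum.inr e, v) ^ 3 =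
            16 := by
        intro e
        simp [hdeg_inr e]
      rw [Finset.sum_congr rfl fun e _ => this e, Finset.sum_const, Finset.card_univ,
        card_edgeSet_pathGraph n h1, smul_eq_mul]
    rw [hA, hB]
  rw [key]
  obtain ⟨k, rfl⟩ : ∃ k, n = k + 1 := ⟨n - 1, by omega⟩
  push_cast
  ring
end
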